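/- Let K be a finite set of positive integers, p = (p_k)_{k∈K} a probability vector, σ > 0, ρ > 0 with ρ E_p(k) > 1, and let Θ^* ∈ (0,1) satisfy ρ Σ_{k∈K} k² p_k/(1+ρ k Θ^*) = E_p(k). Define μ(N) = (1/(σρΘ^*)) Σ_{k∈K} h_k/k where h_k = p_k k⁴/((1+σkρΘ^*)²(1+ρkΘ^*)) / Σ_{s∈K} p_s s⁴/((1+σsρΘ^*)²(1+ρsΘ^*)), and define μ(N₀) = 1/(σ(ρ E_p(k) − 1)), the corresponding quantity for the homogeneous network with constant connectivity E_p(k). Then μ(N) ≤ μ(N₀), with equality if and only if p is concentrated on a single degree; in particular, if p gives positive mass to at least two distinct degrees, then μ(N) < μ(N₀). -/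

import Mathlib

private lemma ds_combine (K : Finset ℕ) (A B C D E F : ℕ → ℝ) :
    ∑ i ∈ K, ∑ j ∈ K, (A i * B j + C i * D j - E i * F j)
      = (∑ i ∈ K, A i) * (∑ j ∈ K, B j) + (∑ i ∈ K, C i) * (∑ j ∈ K, D j)
        - (∑ i ∈ K, E i) * (∑ j ∈ K, F j) := by
  have h1 : ∀ i, ∑ j ∈ K, (A i * B j + C i * D j - E i * F j)
      = A i * (∑ j ∈ K, B j) + C i * (∑ j ∈ K, D j) - E i * (∑ j ∈ K, F j) := by
    intro i
    rw [Finset.sum_sub_distrib, Finset.sum_add_distrib, ← Finset.mul_sum, ← Finset.mul_sum,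
      ← Finset.mul_sum]
  rw [Finset.sum_congr rfl fun i _ => h1 i, Finset.sum_sub_distrib, Finset.sum_add_distrib,
    ← Finset.sum_mul, ← Finset.sum_mul, ← Finset.sum_mul]

private lemma ds_combine4 (K : Finset ℕ) (A B C D E F G H : ℕ → ℝ) :
    ∑ i ∈ K, ∑ j ∈ K, (A i * B j + C i * D j - E i * F j - G i * H j)
      = (∑ i ∈ K, A i) * (∑ j ∈ K, B j) + (∑ i ∈ K, C i) * (∑ j ∈ K, D j)
        - (∑ i ∈ K, E i) * (∑ j ∈ K, F j) - (∑ i ∈ K, G i) * (∑ j ∈ K, H j) := by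
  have h1 : ∀ i, ∑ j ∈ K, (A i * B j + C i * D j - E i * F j - G i * H j)
      = A i * (∑ j ∈ K, B j) + C i * (∑ j ∈ K, D j) - E i * (∑ j ∈ K, F j)
        - G i * (∑ j ∈ K, H j) := by
    intro i
    rw [Finset.sum_sub_distrib, Finset.sum_sub_distrib, Finset.sum_add_distrib,
      ← Finset.mul_sum, ← Finset.mul_sum, ← Finset.mul_sum, ← Finset.mul_sum]
  rw [Finset.sum_congr rfl fun i _ => h1 i, Finset.sum_sub_distrib, Finset.sum_sub_distrib,
    Finset.sum_add_distrib, ← Finset.sum_mul, ← Finset.sum_mul, ← Finset.sum_mul,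
    ← Finset.sum_mul]

/-- Cauchy–Schwarz identity in double-sum form. -/
private lemma cs_id (K : Finset ℕ) (p F G : ℕ → ℝ) (hF : ∀ k ∈ K, F k ≠ 0) :
    ∑ i ∈ K, ∑ j ∈ K, p i * p j * ((G i * F j - G j * F i) ^ 2 / (F i * F j))
      = 2 * ((∑ k ∈ K, p k * (G k ^ 2 / F k)) * (∑ k ∈ K, p k * F k))
        - 2 * (∑ k ∈ K, p k * G k) ^ 2 := by
  have step : ∑ i ∈ K, ∑ j ∈ K, p i * p j * ((G i * F j - G j * F i) ^ 2 / (F i * F j))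
      = ∑ i ∈ K, ∑ j ∈ K, ((p i * (G i ^ 2 / F i)) * (p j * F j)
          + (p i * F i) * (p j * (G j ^ 2 / F j))
          - (2 * (p i * G i)) * (p j * G j)) := by
    refine Finset.sum_congr rfl fun i hi => Finset.sum_congr rfl fun j hj => ?_
    have hFi := hF i hi
    have hFj := hF j hj
    field_simp
    ring
  rw [step, ds_combine]
  have h2 : ∑ k ∈ K, 2 * (p k * G k) = 2 * ∑ k ∈ K, p k * G k := by
    rw [Finset.mul_sum]
  rw [h2]
  ring

/-- Chebyshev sum identity in double-sum form. -/
private lemma cheb_id (K : Finset ℕ) (p F G : ℕ → ℝ) :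
    ∑ i ∈ K, ∑ j ∈ K, p i * p j * ((F i - F j) * (G i - G j))
      = 2 * ((∑ k ∈ K, p k) * (∑ k ∈ K, p k * (F k * G k)))
        - 2 * ((∑ k ∈ K, p k * F k) * (∑ k ∈ K, p k * G k)) := by
  have step : ∑ i ∈ K, ∑ j ∈ K, p i * p j * ((F i - F j) * (G i - G j))
      = ∑ i ∈ K, ∑ j ∈ K, ((p i * (F i * G i)) * p j + p i * (p j * (F j * G j))
          - (p i * F i) * (p j * G j) - (p i * G i) * (p j * F j)) := by
    refine Finset.sum_congr rfl fun i _ => Finset.sum_congr rfl fun j _ => ?_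
    ring
  rw [step, ds_combine4]
  ring

set_option maxHeartbeats 1000000 in
/-- On a heterogeneous host contact network, the aggregated single-to-coinfection
ratio `μ(N)` is at most the homogeneous value `μ(N₀)`, with equality iff the
degree distribution is concentrated on a single degree. -/
theorem network_heterogeneity_lowers_mu
    (K : Finset ℕ) (hK : ∀ k ∈ K, 0 < k)
    (p : ℕ → ℝ) (hp : ∀ k ∈ K, 0 ≤ p k) (hpsum : ∑ k ∈ K, p k = 1)
    (σ ρ : ℝ) (hσ : 0 < σ) (hρ : 0 < ρ)
    (hR0 : 1 < ρ * ∑ k ∈ K, (k:ℝ) * p k)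
    (Θ : ℝ) (hΘ : Θ ∈ Set.Ioo (0:ℝ) 1)
    (hfix : ρ * ∑ k ∈ K, (k:ℝ)^2 * p k / (1 + ρ * (k:ℝ) * Θ) = ∑ k ∈ K, (k:ℝ) * p k)
    (h : ℕ → ℝ)
    (hh : ∀ k, h k = (p k * (k:ℝ)^4 / ((1 + σ * (k:ℝ) * ρ * Θ)^2 * (1 + ρ * (k:ℝ) * Θ))) /
      (∑ s ∈ K, p s * (s:ℝ)^4 / ((1 + σ * (s:ℝ) * ρ * Θ)^2 * (1 + ρ * (s:ℝ) * Θ))))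
    (μN μN0 : ℝ)
    (hμN : μN = (1 / (σ * ρ * Θ)) * ∑ k ∈ K, h k / (k:ℝ))
    (hμN0 : μN0 = 1 / (σ * (ρ * (∑ k ∈ K, (k:ℝ) * p k) - 1))) :
    μN ≤ μN0 ∧
    (μN = μN0 ↔ ∃ k₀ ∈ K, ∀ k ∈ K, p k ≠ 0 → k = k₀) := by
  obtain ⟨hΘ0, hΘ1⟩ := hΘ
  have haP : ∀ k : ℕ, (0:ℝ) < 1 + ρ * (k:ℝ) * Θ := fun k => by positivity
  have hbP : ∀ k : ℕ, (0:ℝ) < 1 + σ * (k:ℝ) * ρ * Θ := fun k => by positivity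
  set E := ∑ k ∈ K, (k:ℝ) * p k with hEdef
  have hEpos : 0 < E := by nlinarith
  have hρE : (0:ℝ) < ρ * E - 1 := by linarith
  -- there is an atom
  obtain ⟨i, hiK, hpi⟩ : ∃ i ∈ K, p i ≠ 0 := by
    by_contra hc
    push_neg at hc
    exact one_ne_zero (hpsum.symm.trans (Finset.sum_eq_zero hc))
  have hpi' : 0 < p i := lt_of_le_of_ne (hp i hiK) (Ne.symm hpi)
  have hiR : (0:ℝ) < (i:ℝ) := by exact_mod_cast hK i hiK
  -- the main sums
  set W := ∑ s ∈ K, p s * (s:ℝ)^4 / ((1 + σ * (s:ℝ) * ρ * Θ)^2 * (1 + ρ * (s:ℝ) * Θ))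
    with hWdef
  set S3 := ∑ k ∈ K, p k * (k:ℝ)^3 / ((1 + σ * (k:ℝ) * ρ * Θ)^2 * (1 + ρ * (k:ℝ) * Θ))
    with hS3def
  set T3 := ∑ k ∈ K, p k * (k:ℝ)^3 / (1 + σ * (k:ℝ) * ρ * Θ)^2 with hT3def
  set S2 := ∑ k ∈ K, (k:ℝ)^2 * p k / (1 + ρ * (k:ℝ) * Θ) with hS2def
  clear_value E W S3 T3 S2
  have hWpos : 0 < W := by
    rw [hWdef]
    refine Finset.sum_pos' (fun s hs => by
      exact div_nonneg (mul_nonneg (hp s hs) (by positivity))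
        (by positivity)) ⟨i, hiK, ?_⟩
    exact div_pos (mul_pos hpi' (by positivity)) (by positivity)
  have hS3pos : 0 < S3 := by
    rw [hS3def]
    refine Finset.sum_pos' (fun s hs => by
      exact div_nonneg (mul_nonneg (hp s hs) (by positivity))
        (by positivity)) ⟨i, hiK, ?_⟩
    exact div_pos (mul_pos hpi' (by positivity)) (by positivity)
  have hS2pos : 0 < S2 := by
    rw [hS2def]
    refine Finset.sum_pos' (fun s hs => by
      exact div_nonneg (mul_nonneg (by positivity) (hp s hs)) (by positivity))
      ⟨i, hiK, ?_⟩
    exact div_pos (mul_pos (by positivity) hpi') (by positivity)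
  -- ∑ h k / k = S3 / W
  have hSumhk : ∑ k ∈ K, h k / (k:ℝ) = S3 / W := by
    rw [hS3def, Finset.sum_div]
    refine Finset.sum_congr rfl fun k hk => ?_
    rw [hh k]
    have hk0 : ((k:ℝ)) ≠ 0 := Nat.cast_ne_zero.2 (hK k hk).ne'
    have hbk := (hbP k).ne'
    have hak := (haP k).ne'
    field_simp
  -- ρΘ W = T3 - S3
  have hidW : ρ * Θ * W = T3 - S3 := by
    rw [hWdef, hT3def, hS3def, Finset.mul_sum, ← Finset.sum_sub_distrib]
    refine Finset.sum_congr rfl fun k hk => ?_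
    have hbk := (hbP k).ne'
    have hak := (haP k).ne'
    field_simp
    ring
  -- Cauchy–Schwarz: E^2 ≤ S2 * A
  have hcs := cs_id K p (fun k => 1 + ρ * (k:ℝ) * Θ) (fun k => (k:ℝ))
    (fun k _ => (haP k).ne')
  have hconv1 : ∑ k ∈ K, p k * ((k:ℝ) ^ 2 / (1 + ρ * (k:ℝ) * Θ)) = S2 := by
    rw [hS2def]
    exact Finset.sum_congr rfl fun k _ => by ring
  have hconv2 : ∑ k ∈ K, p k * (k:ℝ) = E := by
    rw [hEdef]
    exact Finset.sum_congr rfl fun k _ => mul_comm _ _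
  rw [hconv1, hconv2] at hcs
  -- Chebyshev : A * S3 ≤ T3
  have hcheb := cheb_id K p (fun k => 1 + ρ * (k:ℝ) * Θ)
    (fun k => (k:ℝ)^3 / ((1 + ρ * (k:ℝ) * Θ) * (1 + σ * (k:ℝ) * ρ * Θ)^2))
  have hconv3 : ∑ k ∈ K, p k * ((1 + ρ * (k:ℝ) * Θ) *
      ((k:ℝ)^3 / ((1 + ρ * (k:ℝ) * Θ) * (1 + σ * (k:ℝ) * ρ * Θ)^2))) = T3 := by
    rw [hT3def]
    refine Finset.sum_congr rfl fun k _ => ?_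
    have hbk := (hbP k).ne'
    have hak := (haP k).ne'
    field_simp
  have hconv4 : ∑ k ∈ K, p k *
      ((k:ℝ)^3 / ((1 + ρ * (k:ℝ) * Θ) * (1 + σ * (k:ℝ) * ρ * Θ)^2)) = S3 := by
    rw [hS3def]
    refine Finset.sum_congr rfl fun k _ => ?_
    rw [mul_comm ((1 + ρ * (k:ℝ) * Θ)) ((1 + σ * (k:ℝ) * ρ * Θ)^2), mul_div_assoc]
  rw [hconv3, hconv4, hpsum] at hcheb
  set A := ∑ k ∈ K, p k * (1 + ρ * (k:ℝ) * Θ) with hAdef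
  clear_value A
  -- monotonicity needed for Chebyshev
  have hUmono : ∀ s t : ℕ, s ≤ t →
      (s:ℝ)^3 / ((1 + ρ * (s:ℝ) * Θ) * (1 + σ * (s:ℝ) * ρ * Θ)^2)
        ≤ (t:ℝ)^3 / ((1 + ρ * (t:ℝ) * Θ) * (1 + σ * (t:ℝ) * ρ * Θ)^2) := by
    intro s t hst
    have hst' : (s:ℝ) ≤ (t:ℝ) := Nat.cast_le.2 hst
    rw [div_le_div_iff₀ (by positivity) (by positivity)]
    have h1 : (s:ℝ) * (1 + ρ * (t:ℝ) * Θ) ≤ (t:ℝ) * (1 + ρ * (s:ℝ) * Θ) := by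
      have : (s:ℝ) * (1 + ρ * (t:ℝ) * Θ) - (t:ℝ) * (1 + ρ * (s:ℝ) * Θ)
          = (s:ℝ) - (t:ℝ) := by ring
      linarith
    have h2 : (s:ℝ) * (1 + σ * (t:ℝ) * ρ * Θ) ≤ (t:ℝ) * (1 + σ * (s:ℝ) * ρ * Θ) := by
      have : (s:ℝ) * (1 + σ * (t:ℝ) * ρ * Θ) - (t:ℝ) * (1 + σ * (s:ℝ) * ρ * Θ)
          = (s:ℝ) - (t:ℝ) := by ring
      linarith
    calc (s:ℝ)^3 * ((1 + ρ * (t:ℝ) * Θ) * (1 + σ * (t:ℝ) * ρ * Θ)^2)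
        = ((s:ℝ) * (1 + ρ * (t:ℝ) * Θ)) * ((s:ℝ) * (1 + σ * (t:ℝ) * ρ * Θ))^2 := by ring
      _ ≤ ((t:ℝ) * (1 + ρ * (s:ℝ) * Θ)) * ((t:ℝ) * (1 + σ * (s:ℝ) * ρ * Θ))^2 := by
          refine mul_le_mul h1 (pow_le_pow_left₀ (by positivity) h2 2) (by positivity) ?_
          positivity
      _ = (t:ℝ)^3 * ((1 + ρ * (s:ℝ) * Θ) * (1 + σ * (s:ℝ) * ρ * Θ)^2) := by ring
  have hchebnn : 0 ≤ ∑ x ∈ K, ∑ y ∈ K, p x * p y *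
      (((1 + ρ * (x:ℝ) * Θ) - (1 + ρ * (y:ℝ) * Θ)) *
        ((x:ℝ)^3 / ((1 + ρ * (x:ℝ) * Θ) * (1 + σ * (x:ℝ) * ρ * Θ)^2)
          - (y:ℝ)^3 / ((1 + ρ * (y:ℝ) * Θ) * (1 + σ * (y:ℝ) * ρ * Θ)^2))) := by
    refine Finset.sum_nonneg fun x hx => Finset.sum_nonneg fun y hy => ?_
    refine mul_nonneg (mul_nonneg (hp x hx) (hp y hy)) ?_
    rcases le_total x y with hxy | hxy
    · have hF : (1 + ρ * (x:ℝ) * Θ) - (1 + ρ * (y:ℝ) * Θ) ≤ 0 := by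
        have h1 := mul_le_mul_of_nonneg_right
          (mul_le_mul_of_nonneg_left (Nat.cast_le.2 hxy : (x:ℝ) ≤ (y:ℝ)) hρ.le) hΘ0.le
        linarith
      have hU := sub_nonpos.2 (hUmono x y hxy)
      have hprod := mul_nonneg (neg_nonneg.2 hF) (neg_nonneg.2 hU)
      rwa [neg_mul_neg] at hprod
    · have hF : 0 ≤ (1 + ρ * (x:ℝ) * Θ) - (1 + ρ * (y:ℝ) * Θ) := by
        have h1 := mul_le_mul_of_nonneg_right
          (mul_le_mul_of_nonneg_left (Nat.cast_le.2 hxy : (y:ℝ) ≤ (x:ℝ)) hρ.le) hΘ0.le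
        linarith
      have hU := sub_nonneg.2 (hUmono y x hxy)
      exact mul_nonneg hF hU
  have hAS3 : A * S3 ≤ T3 := by
    linarith [hchebnn, hcheb]
  -- nonnegativity of CS double sum
  have hcsnn : 0 ≤ ∑ x ∈ K, ∑ y ∈ K, p x * p y *
      (((x:ℝ) * (1 + ρ * (y:ℝ) * Θ) - (y:ℝ) * (1 + ρ * (x:ℝ) * Θ))^2 /
        ((1 + ρ * (x:ℝ) * Θ) * (1 + ρ * (y:ℝ) * Θ))) := by
    refine Finset.sum_nonneg fun x hx => Finset.sum_nonneg fun y hy => ?_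
    exact mul_nonneg (mul_nonneg (hp x hx) (hp y hy))
      (div_nonneg (sq_nonneg _) (mul_pos (haP x) (haP y)).le)
  have hE2 : E^2 ≤ S2 * A := by
    linarith [hcsnn, hcs]
  have hMain : E^2 * S3 ≤ S2 * T3 :=
    calc E^2 * S3 ≤ (S2 * A) * S3 := mul_le_mul_of_nonneg_right hE2 hS3pos.le
      _ = S2 * (A * S3) := mul_assoc _ _ _
      _ ≤ S2 * T3 := mul_le_mul_of_nonneg_left hAS3 hS2pos.le
  -- the key formula for μN0 - μN
  have hane : ∀ k : ℕ, (1 + ρ * (k:ℝ) * Θ) ≠ 0 := fun k => (haP k).ne'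
  have hkey : μN0 - μN
      = (S2 * T3 - E^2 * S3) / (S2 * ((ρ * E - 1) * (σ * ρ * Θ) * W)) := by
    rw [hμN0, hμN, hSumhk]
    clear hcs hcheb hchebnn hcsnn hconv1 hconv2 hconv3 hconv4 hUmono hh
    have hT3' : T3 = ρ * Θ * W + S3 := by linarith
    rw [hT3']
    have hE' : E = ρ * S2 := by linarith [hfix]
    rw [hE']
    have hne1 : ρ * (ρ * S2) - 1 ≠ 0 := by
      rw [← hE']; exact hρE.ne'
    field_simp [hσ.ne', hρ.ne', hΘ0.ne', hWpos.ne', hS2pos.ne', hne1]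
    have hne2 : -1 + ρ^2 * S2 ≠ 0 := by
      intro h0; apply hne1; linear_combination h0
    have hx : (-1 + ρ^2 * S2) * (-1 + ρ^2 * S2)⁻¹ = 1 := mul_inv_cancel₀ hne2
    linear_combination S3 * hx
  have hDpos : 0 < S2 * ((ρ * E - 1) * (σ * ρ * Θ) * W) := by
    have : (0:ℝ) < σ * ρ * Θ := by positivity
    exact mul_pos hS2pos (mul_pos (mul_pos hρE this) hWpos)
  have hle : μN ≤ μN0 := by
    have h0 : 0 ≤ μN0 - μN := by
      rw [hkey]
      exact div_nonneg (by linarith) hDpos.le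
    linarith
  refine ⟨hle, ?_, ?_⟩
  · -- equality → single atom
    intro heq
    by_contra hcon
    push_neg at hcon
    obtain ⟨j, hjK, hpj, hji⟩ := hcon i hiK
    have hpj' : 0 < p j := lt_of_le_of_ne (hp j hjK) (Ne.symm hpj)
    -- strict CS
    have hcspos : 0 < ∑ x ∈ K, ∑ y ∈ K, p x * p y *
        (((x:ℝ) * (1 + ρ * (y:ℝ) * Θ) - (y:ℝ) * (1 + ρ * (x:ℝ) * Θ))^2 /
          ((1 + ρ * (x:ℝ) * Θ) * (1 + ρ * (y:ℝ) * Θ))) := by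
      refine Finset.sum_pos' (fun x hx => Finset.sum_nonneg fun y hy =>
        mul_nonneg (mul_nonneg (hp x hx) (hp y hy))
          (div_nonneg (sq_nonneg _) (mul_pos (haP x) (haP y)).le)) ⟨i, hiK, ?_⟩
      refine Finset.sum_pos' (fun y hy =>
        mul_nonneg (mul_nonneg (hp i hiK) (hp y hy))
          (div_nonneg (sq_nonneg _) (mul_pos (haP i) (haP y)).le)) ⟨j, hjK, ?_⟩
      have hid : (i:ℝ) * (1 + ρ * (j:ℝ) * Θ) - (j:ℝ) * (1 + ρ * (i:ℝ) * Θ)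
          = (i:ℝ) - (j:ℝ) := by ring
      have hne : (i:ℝ) - (j:ℝ) ≠ 0 := by
        have : (i:ℝ) ≠ (j:ℝ) := by exact_mod_cast hji.symm
        exact sub_ne_zero.2 this
      refine mul_pos (mul_pos hpi' hpj') (div_pos ?_ (mul_pos (haP i) (haP j)))
      rw [hid]
      exact lt_of_le_of_ne (sq_nonneg _) (Ne.symm (pow_ne_zero 2 hne))
    have hE2s : E^2 < S2 * A := by
      linarith [hcspos, hcs]
    have hMains : E^2 * S3 < S2 * T3 :=
      calc E^2 * S3 < (S2 * A) * S3 := mul_lt_mul_of_pos_right hE2s hS3pos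
        _ = S2 * (A * S3) := mul_assoc _ _ _
        _ ≤ S2 * T3 := mul_le_mul_of_nonneg_left hAS3 hS2pos.le
    have : 0 < μN0 - μN := by
      rw [hkey]
      exact div_pos (by linarith) hDpos
    linarith
  · -- single atom → equality
    rintro ⟨k₀, hk₀K, hsupp⟩
    have hzero : ∀ k ∈ K, k ≠ k₀ → p k = 0 := fun k hk hne => by
      by_contra hpk
      exact hne (hsupp k hk hpk)
    have hpk₀ : p k₀ = 1 := by
      rw [← hpsum]
      exact (Finset.sum_eq_single_of_mem _ hk₀K fun k hk hne => hzero k hk hne).symm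
    have hEc : E = (k₀:ℝ) * p k₀ := by
      rw [hEdef]
      exact Finset.sum_eq_single_of_mem _ hk₀K fun k hk hne => by
        rw [hzero k hk hne, mul_zero]
    have hS2c : S2 = (k₀:ℝ)^2 * p k₀ / (1 + ρ * (k₀:ℝ) * Θ) := by
      rw [hS2def]
      exact Finset.sum_eq_single_of_mem _ hk₀K fun k hk hne => by
        rw [hzero k hk hne, mul_zero, zero_div]
    have hS3c : S3 = p k₀ * (k₀:ℝ)^3 / ((1 + σ * (k₀:ℝ) * ρ * Θ)^2 * (1 + ρ * (k₀:ℝ) * Θ)) := by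
      rw [hS3def]
      exact Finset.sum_eq_single_of_mem _ hk₀K fun k hk hne => by
        rw [hzero k hk hne, zero_mul, zero_div]
    have hT3c : T3 = p k₀ * (k₀:ℝ)^3 / (1 + σ * (k₀:ℝ) * ρ * Θ)^2 := by
      rw [hT3def]
      exact Finset.sum_eq_single_of_mem _ hk₀K fun k hk hne => by
        rw [hzero k hk hne, zero_mul, zero_div]
    have hnum : S2 * T3 - E^2 * S3 = 0 := by
      rw [hEc, hS2c, hS3c, hT3c, hpk₀]
      have hak := (haP k₀).ne'
      have hbk := (hbP k₀).ne'
      field_simp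
      ring
    have : μN0 - μN = 0 := by rw [hkey, hnum, zero_div]
    linarith
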